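/- Suppose K has exactly 4 elements and τ(x) = x² (so τ is the unique order-2 automorphism of K). Let n ≥ 2 and let S, W be 1-dimensional non-degenerate subspaces of V such that S + W is non-degenerate. Then S = W or Ψ(s,w) = 0 for all s ∈ S, w ∈ W. -/

import Mathlib

namespace FramePaper

variable {K : Type*} [Field K]

/-- The standard Hermitian form `Ψ(v,w) = ∑ i, v i * τ (w i)` on `Fin n → K`. -/
def Psi (τ : K → K) {n : ℕ} (v w : Fin n → K) : K :=
  ∑ i, v i * τ (w i)

lemma Psi_add_left (τ : K → K) {n : ℕ} (a b w : Fin n → K) :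
    Psi τ (a + b) w = Psi τ a w + Psi τ b w := by
  simp [Psi, add_mul, Finset.sum_add_distrib]

lemma Psi_smul_left (τ : K → K) {n : ℕ} (c : K) (a w : Fin n → K) :
    Psi τ (c • a) w = c * Psi τ a w := by
  simp [Psi, Finset.mul_sum, mul_assoc]

/-- The orthogonal complement `S^⊥ = {v | ∀ s ∈ S, Ψ(v,s) = 0}`. -/
def perp (τ : K → K) {n : ℕ} (S : Submodule K (Fin n → K)) :
    Submodule K (Fin n → K) where
  carrier := {v | ∀ s ∈ S, Psi τ v s = 0}
  add_mem' := by
    intro a b ha hb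
    show ∀ s ∈ S, Psi τ (a + b) s = 0
    intro s hs
    rw [Psi_add_left, ha s hs, hb s hs, add_zero]
  zero_mem' := by
    show ∀ s ∈ S, Psi τ 0 s = 0
    intro s hs
    simp [Psi]
  smul_mem' := by
    intro c a ha
    show ∀ s ∈ S, Psi τ (c • a) s = 0
    intro s hs
    rw [Psi_smul_left, ha s hs, mul_zero]

/-- A subspace `S` is non-degenerate iff `S ⊓ S^⊥ = ⊥`. -/
def Nondeg (τ : K → K) {n : ℕ} (S : Submodule K (Fin n → K)) : Prop :=
  S ⊓ perp τ S = ⊥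

/-- Vertices of `G(V)`: the `1`-dimensional non-degenerate subspaces. -/
def IsVertex (τ : K → K) {n : ℕ} (S : Submodule K (Fin n → K)) : Prop :=
  Module.finrank K S = 1 ∧ Nondeg τ S

/-- The graph `G(V)` on the `1`-dimensional non-degenerate subspaces of `V = Fin n → K`,
with `S, W` adjacent iff `S ≠ W` and `Ψ(s,w) = 0` for all `s ∈ S`, `w ∈ W`. -/
def FrameGraph (τ : K →+* K) (hτ2 : ∀ x, τ (τ x) = x) (n : ℕ) :
    SimpleGraph {S : Submodule K (Fin n → K) // IsVertex (⇑τ) S} where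
  Adj S W := S ≠ W ∧ ∀ s ∈ S.1, ∀ w ∈ W.1, Psi (⇑τ) s w = 0
  symm := ⟨by
    rintro S W ⟨hne, h⟩
    refine ⟨hne.symm, fun w hw s hs => ?_⟩
    have key : Psi (⇑τ) w s = τ (Psi (⇑τ) s w) := by
      simp only [Psi, map_sum, map_mul, hτ2]
      exact Finset.sum_congr rfl fun i _ => mul_comm _ _
    rw [key, h s hs w hw, map_zero]⟩
  loopless := ⟨fun S h => h.1 rfl⟩


lemma Psi_conj (τ : K →+* K) (hτ2 : ∀ x, τ (τ x) = x) {n : ℕ} (v w : Fin n → K) :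
    Psi (⇑τ) w v = τ (Psi (⇑τ) v w) := by
  simp only [Psi, map_sum, map_mul, hτ2]
  exact Finset.sum_congr rfl fun i _ => mul_comm _ _

lemma Psi_smul_right (τ : K →+* K) {n : ℕ} (c : K) (a w : Fin n → K) :
    Psi (⇑τ) a (c • w) = τ c * Psi (⇑τ) a w := by
  simp [Psi, Finset.mul_sum]; ring_nf
  exact Finset.sum_congr rfl fun i _ => by ring

lemma Psi_add_right (τ : K →+* K) {n : ℕ} (a b w : Fin n → K) :
    Psi (⇑τ) w (a + b) = Psi (⇑τ) w a + Psi (⇑τ) w b := by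
  simp [Psi, mul_add, Finset.sum_add_distrib]

lemma Psi_sub_left (τ : K → K) {n : ℕ} (a b w : Fin n → K) :
    Psi τ (a - b) w = Psi τ a w - Psi τ b w := by
  simp [Psi, sub_mul, Finset.sum_sub_distrib]

/-- In a 1-dim nondegenerate subspace spanned by `s`, `Psi s s = 1` (for Frobenius τ). -/
lemma norm_one (τ : K →+* K) (hτ2 : ∀ x, τ (τ x) = x) (hτsq : ∀ x, τ x = x ^ 2)
    {n : ℕ} (s : Fin n → K) (hs0 : s ≠ 0)
    (hnd : Nondeg (⇑τ) (Submodule.span K {s})) : Psi (⇑τ) s s = 1 := by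
  set a := Psi (⇑τ) s s with ha
  have hfix : τ a = a := by
    rw [ha]; exact (Psi_conj τ hτ2 s s).symm
  have ha2 : a ^ 2 = a := by rw [← hτsq, hfix]
  have hane : a ≠ 0 := by
    intro h0
    have hmem : s ∈ Submodule.span K {s} ⊓ perp (⇑τ) (Submodule.span K {s}) := by
      refine ⟨Submodule.mem_span_singleton_self s, ?_⟩
      intro x hx
      obtain ⟨c, rfl⟩ := Submodule.mem_span_singleton.mp hx
      rw [Psi_smul_right, ← ha, h0, mul_zero]
    rw [Nondeg] at hnd
    rw [hnd] at hmem
    exact hs0 hmem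
  have h : a * a = a * 1 := by rw [mul_one, ← sq, ha2]
  exact mul_left_cancel₀ hane h

/-- Suppose `K` has exactly `4` elements and `τ(x) = x²`. For `n ≥ 2`,
if `S` and `W` are `1`-dimensional non-degenerate subspaces of `V` such that `S + W` is
non-degenerate, then `S = W` or `S` and `W` are orthogonal. -/
theorem statement7 (τ : K →+* K) (hτne : (⇑τ : K → K) ≠ id) (hτ2 : ∀ x, τ (τ x) = x)
    (hK : Nat.card K = 4) (hτsq : ∀ x, τ x = x ^ 2)
    (n : ℕ) (hn : 2 ≤ n)
    (S W : Submodule K (Fin n → K))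
    (hS1 : Module.finrank K S = 1) (hSnd : Nondeg (⇑τ) S)
    (hW1 : Module.finrank K W = 1) (hWnd : Nondeg (⇑τ) W)
    (hsum : Nondeg (⇑τ) (S ⊔ W)) :
    S = W ∨ ∀ s ∈ S, ∀ w ∈ W, Psi (⇑τ) s w = 0 := by
  -- obtain generators
  obtain ⟨s, hsS, hs0⟩ : ∃ s, s ∈ S ∧ s ≠ 0 := by
    by_contra h
    push_neg at h
    have : S = ⊥ := by
      ext x; simp only [Submodule.mem_bot]
      constructor
      · intro hx; by_contra hx0; exact hx0 (h x hx)
      · rintro rfl; exact S.zero_mem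
    rw [this] at hS1; simp at hS1
  obtain ⟨w, hwW, hw0⟩ : ∃ w, w ∈ W ∧ w ≠ 0 := by
    by_contra h
    push_neg at h
    have : W = ⊥ := by
      ext x; simp only [Submodule.mem_bot]
      constructor
      · intro hx; by_contra hx0; exact hx0 (h x hx)
      · rintro rfl; exact W.zero_mem
    rw [this] at hW1; simp at hW1
  have hSspan : S = Submodule.span K {s} := by
    refine (Submodule.eq_of_le_of_finrank_eq (Submodule.span_le.mpr ?_) ?_).symm
    · simpa using hsS
    · rw [finrank_span_singleton hs0, hS1]
  have hWspan : W = Submodule.span K {w} := by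
    refine (Submodule.eq_of_le_of_finrank_eq (Submodule.span_le.mpr ?_) ?_).symm
    · simpa using hwW
    · rw [finrank_span_singleton hw0, hW1]
  have hanorm : Psi (⇑τ) s s = 1 := norm_one τ hτ2 hτsq s hs0 (hSspan ▸ hSnd)
  have hbnorm : Psi (⇑τ) w w = 1 := norm_one τ hτ2 hτsq w hw0 (hWspan ▸ hWnd)
  set c := Psi (⇑τ) s w with hc
  by_cases hc0 : c = 0
  · right
    intro s' hs' w' hw'
    rw [hSspan] at hs'; rw [hWspan] at hw'
    obtain ⟨p, rfl⟩ := Submodule.mem_span_singleton.mp hs'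
    obtain ⟨q, rfl⟩ := Submodule.mem_span_singleton.mp hw'
    rw [Psi_smul_left, Psi_smul_right, ← hc, hc0]
    ring
  by_cases hSW : S = W
  · exact Or.inl hSW
  exfalso
  -- c^3 = 1
  have hc4 : c ^ 4 = c := by
    have := hτ2 c
    rw [hτsq, hτsq] at this
    calc c ^ 4 = (c ^ 2) ^ 2 := by ring
    _ = c := this
  have hc3 : τ c * c = 1 := by
    rw [hτsq]
    apply mul_left_cancel₀ hc0
    rw [mul_one, show c * (c ^ 2 * c) = c ^ 4 by ring, hc4]
  have hws : Psi (⇑τ) w s = τ c := by rw [Psi_conj τ hτ2, ← hc]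
  set u := τ c • s - w with hu
  have hune : u ≠ 0 := by
    intro h0
    have hweq : w = τ c • s := by
      have := sub_eq_zero.mp h0
      exact this.symm
    have hwS : w ∈ S := hweq ▸ S.smul_mem _ hsS
    have : W = S := by
      refine Submodule.eq_of_le_of_finrank_eq ?_ (by rw [hW1, hS1])
      rw [hWspan]
      exact Submodule.span_le.mpr (by simpa using hwS)
    exact hSW this.symm
  have huS : u ∈ S ⊔ W := by
    apply Submodule.sub_mem
    · exact Submodule.mem_sup_left (S.smul_mem _ hsS)
    · exact Submodule.mem_sup_right hwW
  have hus : Psi (⇑τ) u s = 0 := by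
    rw [hu, Psi_sub_left, Psi_smul_left, hanorm, hws, mul_one, sub_self]
  have huw : Psi (⇑τ) u w = 0 := by
    rw [hu, Psi_sub_left, Psi_smul_left, ← hc, hbnorm, hc3, sub_self]
  have huperp : u ∈ perp (⇑τ) (S ⊔ W) := by
    intro x hx
    obtain ⟨xs, hxs, xw, hxw, rfl⟩ := Submodule.mem_sup.mp hx
    rw [hSspan] at hxs; rw [hWspan] at hxw
    obtain ⟨p, rfl⟩ := Submodule.mem_span_singleton.mp hxs
    obtain ⟨q, rfl⟩ := Submodule.mem_span_singleton.mp hxw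
    rw [Psi_add_right, Psi_smul_right, Psi_smul_right, hus, huw]
    ring
  have hmem : u ∈ (S ⊔ W) ⊓ perp (⇑τ) (S ⊔ W) := ⟨huS, huperp⟩
  rw [Nondeg] at hsum
  rw [hsum] at hmem
  exact hune hmem

end FramePaper
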